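/- For every nonnegative integer n and every nonnegative integer s, S_n^{(r,k)}(x|a_1,…,a_r) = Σ_{m=0}^n ( C(n,m) Σ_{l=0}^{n−m} (C(n−m,l)/C(l+s,l)) S_2(l+s,s) S_{n−m−l}^{(r,k)}(a_1,…,a_r) ) 𝔅_m^{(s)}(x), as an identity of polynomials in x. -/

import Mathlib

open PowerSeries Finset

/-- The formal power series `e^{c·t}` over a commutative `ℚ`-algebra `R`. -/
noncomputable def expS {R : Type*} [CommRing R] [Algebra ℚ R] (c : R) : PowerSeries R :=
  PowerSeries.rescale c (PowerSeries.exp R)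

/-- The formal power series `Li_k(1 - e^{-t})` over `ℂ`, where
`Li_k(z) = ∑_{m ≥ 1} z^m / m^k` is the `k`-th polylogarithm.  Since `1 - e^{-t}`
has order `1`, the coefficient of `t^n` only involves the terms with `1 ≤ m ≤ n`. -/
noncomputable def Lik (k : ℤ) : PowerSeries ℂ :=
  PowerSeries.mk fun n => ∑ m ∈ Finset.Icc 1 n,
    ((m : ℂ) ^ k)⁻¹ * PowerSeries.coeff n ((1 - expS (-1 : ℂ)) ^ m)

/-- The exponential generating function `∑_n p n · t^n / n!` of a sequence of
complex polynomials. -/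
noncomputable def egf (p : ℕ → Polynomial ℂ) : PowerSeries (Polynomial ℂ) :=
  PowerSeries.mk fun n => ((n.factorial : ℂ))⁻¹ • p n

private lemma ratHom_comm' {R S : Type*} [CommRing R] [Algebra ℚ R] [CommRing S] [Algebra ℚ S]
    (φ : R →+* S) (q : ℚ) : φ (algebraMap ℚ R q) = algebraMap ℚ S q :=
  RingHom.congr_fun (RingHom.ext_rat (φ.comp (algebraMap ℚ R)) (algebraMap ℚ S)) q

private lemma map_expS' {R S : Type*} [CommRing R] [Algebra ℚ R] [CommRing S] [Algebra ℚ S]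
    (φ : R →+* S) (c : R) : PowerSeries.map φ (expS c) = expS (φ c) := by
  ext n
  simp [expS, PowerSeries.coeff_map, PowerSeries.coeff_rescale, PowerSeries.coeff_exp,
    map_mul, map_pow, ratHom_comm' φ]

private lemma expS_zero' {R : Type*} [CommRing R] [Algebra ℚ R] : expS (0 : R) = 1 := by
  rw [expS, rescale_zero]
  simp [PowerSeries.constantCoeff_exp]

private lemma coeff_one_expS' {R : Type*} [CommRing R] [Algebra ℚ R] (c : R) :
    PowerSeries.coeff 1 (expS c) = c := by
  simp [expS, PowerSeries.coeff_rescale, PowerSeries.coeff_exp]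

private lemma expS_sub_one_ne' {R : Type*} [CommRing R] [Algebra ℚ R] {c : R} (hc : c ≠ 0) :
    expS c - 1 ≠ 0 := by
  intro h
  apply hc
  have := congrArg (PowerSeries.coeff (R := R) 1) h
  simpa [coeff_one_expS', PowerSeries.coeff_one] using this

theorem stmt12 (r : ℕ) (hr : 0 < r) (k : ℤ) (a : Fin r → ℂ) (ha : ∀ j, a j ≠ 0)
    (s : ℕ) (S Bs : ℕ → Polynomial ℂ) (S2 : ℕ → ℕ → ℂ)
    -- `S n` is the mixed-type polynomial `S_n^{(r,k)}(x|a_1,…,a_r)`: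
    (hS : (PowerSeries.X : PowerSeries (Polynomial ℂ)) ^ r
        * PowerSeries.map Polynomial.C (Lik k) * expS Polynomial.X
        = (∏ j, (expS (Polynomial.C (a j)) - 1)) * (1 - expS (-1 : Polynomial ℂ)) * egf S)
    -- `Bs n` is the Bernoulli polynomial `𝔅_n^{(s)}(x)` of order `s`, defined by
    -- `(t/(e^t-1))^s e^{xt} = ∑_n 𝔅_n^{(s)}(x) t^n/n!`:
    (hBs : (PowerSeries.X : PowerSeries (Polynomial ℂ)) ^ s * expS Polynomial.X
        = (expS (1 : Polynomial ℂ) - 1) ^ s * egf Bs)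
    -- `S2 l m` is the Stirling number of the second kind, defined by
    -- `(e^t - 1)^m = m! ∑_{l ≥ m} S2(l,m) t^l / l!`:
    (hS2 : ∀ m, (PowerSeries.exp ℂ - 1) ^ m
        = (m.factorial : ℂ) • PowerSeries.mk (fun l => S2 l m / (l.factorial : ℂ)))
    (n : ℕ) :
    S n = ∑ m ∈ Finset.range (n + 1),
      Polynomial.C ((n.choose m : ℂ)
          * ∑ l ∈ Finset.range (n - m + 1),
              ((n - m).choose l : ℂ) / ((l + s).choose l : ℂ) * S2 (l + s) s
                * (S (n - m - l)).eval 0)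
        * Bs m := by
  classical
  have hfac : ∀ m : ℕ, ((m.factorial : ℂ)) ≠ 0 := fun m =>
    Nat.cast_ne_zero.mpr m.factorial_ne_zero
  -- Step 1 : S2 vanishing below s and the factorization (exp-1)^s = X^s * U over ℂ
  obtain ⟨g, hg⟩ : (PowerSeries.X : PowerSeries ℂ) ∣ (PowerSeries.exp ℂ - 1) := by
    rw [PowerSeries.X_dvd_iff]
    simp [PowerSeries.constantCoeff_exp]
  have hS2zero : ∀ m < s, S2 m s = 0 := by
    intro m hm
    have h1 : (PowerSeries.coeff (R := ℂ) m) ((PowerSeries.exp ℂ - 1) ^ s) = 0 := by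
      rw [hg, mul_pow, PowerSeries.coeff_X_pow_mul']
      rw [if_neg (Nat.not_le.mpr hm)]
    rw [hS2 s, map_smul, PowerSeries.coeff_mk, smul_eq_mul] at h1
    rcases mul_eq_zero.mp h1 with h | h
    · exact absurd h (hfac s)
    · exact (div_eq_zero_iff.mp h).resolve_right (hfac m)
  set U : PowerSeries ℂ := PowerSeries.mk
      (fun l => (s.factorial : ℂ) * S2 (l + s) s / ((l + s).factorial : ℂ)) with hU
  have hUfac : (PowerSeries.exp ℂ - 1) ^ s = PowerSeries.X ^ s * U := by
    ext m
    rw [hS2 s, map_smul, PowerSeries.coeff_mk, PowerSeries.coeff_X_pow_mul']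
    by_cases h : s ≤ m
    · rw [if_pos h, hU, PowerSeries.coeff_mk]
      rw [Nat.sub_add_cancel h, smul_eq_mul, mul_div_assoc]
    · rw [if_neg h, hS2zero m (Nat.not_le.mp h)]
      simp
  -- Step 2 : transfer the factorization to Polynomial ℂ
  have hmapexp : PowerSeries.map (Polynomial.C : ℂ →+* Polynomial ℂ) (PowerSeries.exp ℂ)
      = expS (1 : Polynomial ℂ) := by
    rw [show PowerSeries.exp ℂ = expS (1 : ℂ) by rw [expS, rescale_one]; rfl, map_expS', map_one]
  have hpolyfac : (expS (1 : Polynomial ℂ) - 1) ^ s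
      = PowerSeries.X ^ s * PowerSeries.map Polynomial.C U := by
    have h := congrArg (PowerSeries.map (Polynomial.C : ℂ →+* Polynomial ℂ)) hUfac
    simpa [map_pow, map_mul, map_sub, map_one, PowerSeries.map_X, hmapexp] using h
  -- Step 3 : expS X = map C U * egf Bs
  have hE : expS (Polynomial.X : Polynomial ℂ) = PowerSeries.map Polynomial.C U * egf Bs := by
    apply mul_left_cancel₀ (pow_ne_zero s (PowerSeries.X_ne_zero :
      (PowerSeries.X : PowerSeries (Polynomial ℂ)) ≠ 0))
    rw [hBs, hpolyfac]
    ring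
  -- Step 4 : evaluate the generating function of S at x = 0
  set S0 : ℕ → Polynomial ℂ := fun j => Polynomial.C ((S j).eval 0) with hS0def
  have hS0 : (PowerSeries.X : PowerSeries (Polynomial ℂ)) ^ r
        * PowerSeries.map Polynomial.C (Lik k)
      = (∏ j, (expS (Polynomial.C (a j)) - 1)) * (1 - expS (-1 : Polynomial ℂ)) * egf S0 := by
    set ε : Polynomial ℂ →+* Polynomial ℂ := Polynomial.C.comp (Polynomial.evalRingHom 0) with hε
    have hεC : ∀ z : ℂ, ε (Polynomial.C z) = Polynomial.C z := by simp [hε]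
    have h := congrArg (PowerSeries.map ε) hS
    simp only [map_mul, map_pow, map_sub, map_one, map_prod, PowerSeries.map_X,
      map_expS'] at h
    have h1 : PowerSeries.map ε (PowerSeries.map Polynomial.C (Lik k))
        = PowerSeries.map Polynomial.C (Lik k) := by
      ext m
      simp [PowerSeries.coeff_map, hεC]
    rw [h1] at h
    have h2 : ε (Polynomial.X : Polynomial ℂ) = 0 := by simp [hε]
    rw [h2, expS_zero', mul_one] at h
    simp only [hεC, map_neg, map_one] at h
    have h5 : PowerSeries.map ε (egf S) = egf S0 := by
      ext j
      simp [PowerSeries.coeff_map, egf, Polynomial.smul_eq_C_mul, map_mul, hεC, hε, hS0def]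
    rw [h5] at h
    exact h
  -- Step 5 : the leading factor is nonzero
  have hDne : (∏ j, (expS (Polynomial.C (a j)) - 1)) * (1 - expS (-1 : Polynomial ℂ)) ≠ 0 := by
    apply mul_ne_zero
    · exact Finset.prod_ne_zero_iff.mpr fun j _ =>
        expS_sub_one_ne' (Polynomial.C_ne_zero.mpr (ha j))
    · intro h
      have := congrArg (PowerSeries.coeff (R := Polynomial ℂ) 1) h
      simp [map_sub, coeff_one_expS', PowerSeries.coeff_one] at this
  -- Step 6 : cancel to get egf S = map C U * egf S0 * egf Bs
  have hegfS : egf S = PowerSeries.map Polynomial.C U * egf S0 * egf Bs := by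
    apply mul_left_cancel₀ hDne
    calc (∏ j, (expS (Polynomial.C (a j)) - 1)) * (1 - expS (-1 : Polynomial ℂ)) * egf S
        = (PowerSeries.X : PowerSeries (Polynomial ℂ)) ^ r
            * PowerSeries.map Polynomial.C (Lik k) * expS Polynomial.X := hS.symm
      _ = ((∏ j, (expS (Polynomial.C (a j)) - 1)) * (1 - expS (-1 : Polynomial ℂ)) * egf S0)
            * (PowerSeries.map Polynomial.C U * egf Bs) := by rw [← hS0, ← hE]
      _ = (∏ j, (expS (Polynomial.C (a j)) - 1)) * (1 - expS (-1 : Polynomial ℂ))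
            * (PowerSeries.map Polynomial.C U * egf S0 * egf Bs) := by ring
  -- Step 7 : merge map C U * egf S0 into a single egf
  set w : ℕ → ℂ := fun p => ∑ l ∈ Finset.range (p + 1),
      ((p.choose l : ℂ) / ((l + s).choose l : ℂ) * S2 (l + s) s * (S (p - l)).eval 0) with hw
  have hV : PowerSeries.map Polynomial.C U * egf S0 = egf (fun p => Polynomial.C (w p)) := by
    refine PowerSeries.ext fun p => ?_
    rw [PowerSeries.coeff_mul, Finset.Nat.sum_antidiagonal_eq_sum_range_succ_mk]
    simp only [PowerSeries.coeff_map, egf, PowerSeries.coeff_mk, hU, hS0def,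
      Polynomial.smul_C, ← Polynomial.C_mul, smul_eq_mul]
    rw [← map_sum]
    apply congrArg
    simp only [hw]
    rw [Finset.mul_sum]
    apply Finset.sum_congr rfl
    intro l hl
    have hl' : l ≤ p := Nat.lt_succ_iff.mp (Finset.mem_range.mp hl)
    rw [Nat.cast_choose ℂ hl', Nat.cast_choose ℂ (Nat.le_add_right l s),
      Nat.add_sub_cancel_left]
    have h1 := hfac p
    have h2 := hfac l
    have h3 := hfac (p - l)
    have h4 := hfac (l + s)
    have h5 := hfac s
    field_simp
  rw [hV] at hegfS
  -- Step 8 : extract the n-th coefficient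
  have hcoeff := congrArg (PowerSeries.coeff (R := Polynomial ℂ) n) hegfS
  rw [PowerSeries.coeff_mul, Finset.Nat.sum_antidiagonal_eq_sum_range_succ_mk] at hcoeff
  simp only [egf, PowerSeries.coeff_mk] at hcoeff
  have hSn : S n = (n.factorial : ℂ) • ((n.factorial : ℂ))⁻¹ • S n := by
    rw [smul_smul, mul_inv_cancel₀ (hfac n), one_smul]
  calc S n = (n.factorial : ℂ) • ((n.factorial : ℂ))⁻¹ • S n := hSn
    _ = (n.factorial : ℂ) • ∑ p ∈ Finset.range (n + 1),
          (((p.factorial : ℂ))⁻¹ • Polynomial.C (w p))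
            * (((n - p).factorial : ℂ))⁻¹ • Bs (n - p) := by rw [hcoeff]
    _ = ∑ m ∈ Finset.range (n + 1),
          Polynomial.C ((n.choose m : ℂ) * w (n - m)) * Bs m := by
        rw [Finset.smul_sum, ← Finset.sum_range_reflect]
        apply Finset.sum_congr rfl
        intro m hm
        have hm' : m ≤ n := Nat.lt_succ_iff.mp (Finset.mem_range.mp hm)
        rw [Nat.add_sub_cancel, Nat.sub_sub_self hm']
        have hsc : (n.choose m : ℂ) * w (n - m)
            = (n.factorial : ℂ) * (((n - m).factorial : ℂ))⁻¹ * ((m.factorial : ℂ))⁻¹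
              * w (n - m) := by
          rw [Nat.cast_choose ℂ hm', div_eq_mul_inv, mul_inv]
          ring
        rw [Polynomial.smul_eq_C_mul, Polynomial.smul_eq_C_mul, Polynomial.smul_eq_C_mul, hsc]
        simp only [Polynomial.C_mul]
        ring
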